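/- For all real numbers a, b with 0 < b ≤ a ≤ 1, the quantity f(a,b) = ∫₀¹ ℓ( λ( [0,b] ∩ ([u, u+a] mod 1) ) ) du satisfies f(a,b) ≤ a·b·log₂(1/b) + a·b. -/

import Mathlib

open scoped BigOperators

noncomputable section

namespace GW

/-- `ℓ(t) = −t·log₂ t` (with `ℓ(0) = 0`, since `Real.logb 2 0 = 0`). -/
def ell (t : ℝ) : ℝ := -(t * Real.logb 2 t)

/-- `f(a,b) = ∫₀¹ ℓ( λ([0,b] ∩ ([u, u+a] mod 1)) ) du`, where `A mod 1` is the image of `A`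
under reduction modulo 1 (the fractional part), and `λ` is Lebesgue measure. -/
def f (a b : ℝ) : ℝ :=
  ∫ u in (0:ℝ)..1,
    ell ((MeasureTheory.volume (Set.Icc (0:ℝ) b ∩ (Int.fract '' Set.Icc u (u + a)))).toReal)

open MeasureTheory Set intervalIntegral

lemma ell_eq (t : ℝ) : ell t = -(t * Real.log t) / Real.log 2 := by
  unfold ell Real.logb; ring

lemma ell_zero : ell 0 = 0 := by simp [ell]

lemma ell_cont : Continuous ell := by
  have h : ell = fun t => -(t * Real.log t) / Real.log 2 := funext ell_eq
  rw [h]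
  exact Real.continuous_mul_log.neg.div_const _

lemma ell_subadd {x y : ℝ} (hx : 0 ≤ x) (hy : 0 ≤ y) : ell (x + y) ≤ ell x + ell y := by
  have hL : (0:ℝ) < Real.log 2 := Real.log_pos one_lt_two
  rcases hx.eq_or_lt with h | hx'
  · simp [← h, ell_zero]
  rcases hy.eq_or_lt with h | hy'
  · simp [← h, ell_zero]
  have key : x * Real.log x + y * Real.log y ≤ (x + y) * Real.log (x + y) := by
    have h1 : x * Real.log x ≤ x * Real.log (x + y) :=
      mul_le_mul_of_nonneg_left (Real.log_le_log hx' (by linarith)) hx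
    have h2 : y * Real.log y ≤ y * Real.log (x + y) :=
      mul_le_mul_of_nonneg_left (Real.log_le_log hy' (by linarith)) hy
    nlinarith
  rw [ell_eq, ell_eq, ell_eq, ← add_div]
  gcongr
  linarith

lemma vol_formula {a b : ℝ} (hb : 0 < b) (hba : b ≤ a) (ha : a ≤ 1) {u : ℝ}
    (hu0 : 0 < u) (hu1 : u < 1) (hne : u + a ≠ 1) :
    (MeasureTheory.volume (Set.Icc (0:ℝ) b ∩ (Int.fract '' Set.Icc u (u + a)))).toReal
      = max 0 (b - u) + max 0 (min b (u + a - 1)) := by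
  rcases lt_or_gt_of_ne hne with h | h
  · -- no wraparound
    have himg : Int.fract '' Icc u (u + a) = Icc u (u + a) := by
      have heq : ∀ x ∈ Icc u (u + a), Int.fract x = id x := fun x hx =>
        Int.fract_eq_self.mpr ⟨le_trans hu0.le hx.1, lt_of_le_of_lt hx.2 h⟩
      rw [image_congr heq, image_id]
    rw [himg, Icc_inter_Icc, max_eq_right hu0.le,
      min_eq_left (by linarith : b ≤ u + a), Real.volume_Icc, ENNReal.toReal_ofReal',
      min_eq_right (by linarith : u + a - 1 ≤ b), max_eq_left (by linarith : u + a - 1 ≤ 0),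
      max_comm]
    ring
  · -- wraparound
    have hb1 : b ≤ 1 := hba.trans ha
    have hc0 : 0 < u + a - 1 := by linarith
    have hcu : u + a - 1 ≤ u := by linarith
    have hsplit : Icc u (u + a) = Icc u 1 ∪ Icc 1 (u + a) :=
      (Icc_union_Icc_eq_Icc (by linarith) (by linarith)).symm
    have himg1 : Int.fract '' Icc u 1 = Ico u 1 ∪ {0} := by
      rw [← Ico_union_right (by linarith : u ≤ 1), image_union]
      congr 1
      · have heq : ∀ x ∈ Ico u 1, Int.fract x = id x := fun x hx =>
          Int.fract_eq_self.mpr ⟨le_trans hu0.le hx.1, hx.2⟩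
        rw [image_congr heq, image_id]
      · simp [Int.fract_one]
    have himg2 : Int.fract '' Icc 1 (u + a) = Icc 0 (u + a - 1) := by
      have heq : ∀ x ∈ Icc (1:ℝ) (u + a), Int.fract x = (fun y => y - 1) x := by
        intro x hx
        have h1 : Int.fract (x - ((1:ℤ):ℝ)) = Int.fract x := Int.fract_sub_intCast x 1
        have h2 : Int.fract (x - 1) = x - 1 :=
          Int.fract_eq_self.mpr ⟨by linarith [hx.1], by linarith [hx.2]⟩
        push_cast at h1
        simpa [h2] using h1.symm
      rw [image_congr heq, image_sub_const_Icc]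
      norm_num
    have hS : Int.fract '' Icc u (u + a) = Ico u 1 ∪ Icc 0 (u + a - 1) := by
      rw [hsplit, image_union, himg1, himg2, union_assoc]
      congr 1
      exact union_eq_self_of_subset_left (singleton_subset_iff.mpr ⟨le_refl 0, hc0.le⟩)
    rw [hS, inter_union_distrib_left]
    have hA : volume (Icc (0:ℝ) b ∩ Ico u 1) = ENNReal.ofReal (b - u) := by
      apply le_antisymm
      · calc volume (Icc (0:ℝ) b ∩ Ico u 1) ≤ volume (Icc u b) := by
              apply measure_mono
              rintro x ⟨⟨_, hxb⟩, hxu, _⟩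
              exact ⟨hxu, hxb⟩
          _ = ENNReal.ofReal (b - u) := Real.volume_Icc
      · calc ENNReal.ofReal (b - u) = volume (Ico u b) := Real.volume_Ico.symm
          _ ≤ volume (Icc (0:ℝ) b ∩ Ico u 1) := by
              apply measure_mono
              rintro x ⟨hxu, hxb⟩
              exact ⟨⟨by linarith, hxb.le⟩, hxu, by linarith⟩
    have hB : Icc (0:ℝ) b ∩ Icc 0 (u + a - 1) = Icc 0 (min b (u + a - 1)) := by
      rw [Icc_inter_Icc, max_self]
    have hAB : volume ((Icc (0:ℝ) b ∩ Ico u 1) ∩ (Icc (0:ℝ) b ∩ Icc 0 (u + a - 1))) = 0 := by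
      refine measure_mono_null ?_ (measure_singleton u)
      rintro x ⟨⟨_, hxu, _⟩, _, _, hxc⟩
      exact mem_singleton_iff.mpr (le_antisymm (hxc.trans hcu) hxu)
    have hun := measure_union_add_inter (μ := volume)
      (t := Icc (0:ℝ) b ∩ Icc 0 (u + a - 1)) (Icc (0:ℝ) b ∩ Ico u 1)
      (measurableSet_Icc.inter measurableSet_Icc)
    rw [hAB, add_zero] at hun
    rw [hun, hA, hB, Real.volume_Icc, ENNReal.toReal_add ENNReal.ofReal_ne_top
      ENNReal.ofReal_ne_top, ENNReal.toReal_ofReal', ENNReal.toReal_ofReal', sub_zero,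
      max_comm (b - u) 0, max_comm (min b (u + a - 1)) 0]

/-- for `0 < b ≤ a ≤ 1`, `f(a,b) ≤ a·b·log₂(1/b) + a·b`. -/
theorem stmt16 (a b : ℝ) (hb : 0 < b) (hba : b ≤ a) (ha : a ≤ 1) :
    f a b ≤ a * b * Real.logb 2 (1 / b) + a * b := by
  have hb1 : b ≤ 1 := hba.trans ha
  have hL : (0:ℝ) < Real.log 2 := Real.log_pos one_lt_two
  set g1 : ℝ → ℝ := fun u => max 0 (b - u) with hg1
  set g2 : ℝ → ℝ := fun u => max 0 (min b (u + a - 1)) with hg2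
  have hg1c : Continuous g1 := continuous_const.max (continuous_const.sub continuous_id)
  have hg2c : Continuous g2 :=
    continuous_const.max (continuous_const.min
      ((continuous_id.add continuous_const).sub continuous_const))
  have hint1 : ∀ p q : ℝ, IntervalIntegrable (fun u => ell (g1 u)) volume p q := fun p q =>
    (ell_cont.comp hg1c).intervalIntegrable p q
  have hint2 : ∀ p q : ℝ, IntervalIntegrable (fun u => ell (g2 u)) volume p q := fun p q =>
    (ell_cont.comp hg2c).intervalIntegrable p q
  -- Step 1: rewrite f as an explicit integral
  have step1 : f a b = ∫ u in (0:ℝ)..1, ell (g1 u + g2 u) := by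
    unfold f
    apply intervalIntegral.integral_congr_ae
    have hnull : volume ({1, 1 - a} : Set ℝ) = 0 :=
      (Set.countable_insert.mpr (Set.countable_singleton _)).measure_zero volume
    filter_upwards [measure_eq_zero_iff_ae_notMem.mp hnull] with x hx hxI
    rw [Set.uIoc_of_le (by norm_num : (0:ℝ) ≤ 1)] at hxI
    have hx1 : x ≠ 1 := fun hh => hx (by simp [hh])
    have hxa : x + a ≠ 1 := fun hh => hx (by simp [show x = 1 - a by linarith])
    exact congrArg ell (vol_formula hb hba ha hxI.1 (lt_of_le_of_ne hxI.2 hx1) hxa)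
  -- Step 2: subadditivity
  have step2 : (∫ u in (0:ℝ)..1, ell (g1 u + g2 u)) ≤
      (∫ u in (0:ℝ)..1, ell (g1 u)) + ∫ u in (0:ℝ)..1, ell (g2 u) := by
    rw [← intervalIntegral.integral_add (hint1 0 1) (hint2 0 1)]
    apply intervalIntegral.integral_mono_on (by norm_num)
      ((ell_cont.comp (hg1c.add hg2c)).intervalIntegrable 0 1) ((hint1 0 1).add (hint2 0 1))
    intro x _
    exact ell_subadd (le_max_left _ _) (le_max_left _ _)
  -- the basic antiderivative computation
  have hIb : ∫ t in (0:ℝ)..b, ell t = -(b^2/2 * Real.log b - b^2/4) / Real.log 2 := by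
    have hderiv : ∀ x ∈ Ioo (0:ℝ) b,
        HasDerivWithinAt (fun t => t^2/2 * Real.log t - t^2/4) (x * Real.log x) (Ioi x) x := by
      intro x hx
      have hp : HasDerivAt (fun t : ℝ => t^2/2) x x := by
        simpa using (hasDerivAt_pow 2 x).div_const 2
      have h1 : HasDerivAt (fun t : ℝ => t^2/2 * Real.log t) (x * Real.log x + x/2) x := by
        have := hp.mul (Real.hasDerivAt_log (ne_of_gt hx.1))
        refine this.congr_deriv ?_
        field_simp [ne_of_gt hx.1]
      have h2 : HasDerivAt (fun t : ℝ => t^2/4) (x/2) x := by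
        have := (hasDerivAt_pow 2 x).div_const 4
        refine this.congr_deriv ?_
        ring
      have h3 := h1.sub h2
      have h4 : x * Real.log x + x/2 - x/2 = x * Real.log x := by ring
      rw [h4] at h3
      exact h3.hasDerivWithinAt
    have hcont : ContinuousOn (fun t : ℝ => t^2/2 * Real.log t - t^2/4) (Icc 0 b) := by
      apply Continuous.continuousOn
      have h : (fun t : ℝ => t^2/2 * Real.log t - t^2/4)
          = fun t => (t/2) * (t * Real.log t) - t^2/4 := by funext t; ring
      rw [h]
      exact ((continuous_id.div_const 2).mul Real.continuous_mul_log).sub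
        ((continuous_pow 2).div_const 4)
    have heval := intervalIntegral.integral_eq_sub_of_hasDeriv_right_of_le hb.le hcont hderiv
      (Real.continuous_mul_log.intervalIntegrable 0 b)
    have h : ∫ t in (0:ℝ)..b, ell t = ∫ t in (0:ℝ)..b, -(t * Real.log t) / Real.log 2 := by
      simp only [ell_eq]
    rw [h, intervalIntegral.integral_div, intervalIntegral.integral_neg, heval]
    norm_num
  -- evaluate the first integral
  have hI1 : ∫ u in (0:ℝ)..1, ell (g1 u) = ∫ t in (0:ℝ)..b, ell t := by
    rw [← intervalIntegral.integral_add_adjacent_intervals (hint1 0 b) (hint1 b 1)]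
    have e1 : ∫ u in (0:ℝ)..b, ell (g1 u) = ∫ u in (0:ℝ)..b, ell (b - u) := by
      apply intervalIntegral.integral_congr
      intro x hx
      rw [Set.uIcc_of_le hb.le] at hx
      show ell (g1 x) = ell (b - x)
      rw [hg1]
      simp only []
      rw [max_eq_right (by linarith [hx.2] : (0:ℝ) ≤ b - x)]
    have e2 : ∫ u in (b:ℝ)..1, ell (g1 u) = 0 := by
      have heq : EqOn (fun u => ell (g1 u)) (fun _ => (0:ℝ)) (Set.uIcc b 1) := by
        intro x hx
        rw [Set.uIcc_of_le hb1] at hx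
        show ell (g1 x) = 0
        rw [hg1]
        simp only []
        rw [max_eq_left (by linarith [hx.1] : b - x ≤ 0)]
        exact ell_zero
      rw [intervalIntegral.integral_congr heq]
      simp
    rw [e1, e2, add_zero, intervalIntegral.integral_comp_sub_left ell b]
    norm_num
  -- evaluate the second integral
  have hI2 : ∫ u in (0:ℝ)..1, ell (g2 u) = (∫ t in (0:ℝ)..b, ell t) + (a - b) * ell b := by
    rw [← intervalIntegral.integral_add_adjacent_intervals (hint2 0 (1-a)) (hint2 (1-a) 1),
      ← intervalIntegral.integral_add_adjacent_intervals (hint2 (1-a) (1+b-a)) (hint2 (1+b-a) 1)]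
    have p1 : ∫ u in (0:ℝ)..(1-a), ell (g2 u) = 0 := by
      have heq : EqOn (fun u => ell (g2 u)) (fun _ => (0:ℝ)) (Set.uIcc 0 (1-a)) := by
        intro x hx
        rw [Set.uIcc_of_le (by linarith : (0:ℝ) ≤ 1 - a)] at hx
        show ell (g2 x) = 0
        rw [hg2]
        simp only []
        rw [min_eq_right (by linarith [hx.2] : x + a - 1 ≤ b),
          max_eq_left (by linarith [hx.2] : x + a - 1 ≤ 0)]
        exact ell_zero
      rw [intervalIntegral.integral_congr heq]
      simp
    have p2 : ∫ u in (1-a:ℝ)..(1+b-a), ell (g2 u) = ∫ t in (0:ℝ)..b, ell t := by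
      have heq : EqOn (fun u => ell (g2 u)) (fun u => ell (u - (1 - a))) (Set.uIcc (1-a) (1+b-a)) := by
        intro x hx
        rw [Set.uIcc_of_le (by linarith : (1-a:ℝ) ≤ 1+b-a)] at hx
        show ell (g2 x) = ell (x - (1 - a))
        rw [hg2]
        simp only []
        rw [min_eq_right (by linarith [hx.2] : x + a - 1 ≤ b),
          max_eq_right (by linarith [hx.1] : (0:ℝ) ≤ x + a - 1)]
        ring_nf
      rw [intervalIntegral.integral_congr heq, intervalIntegral.integral_comp_sub_right ell (1-a)]
      norm_num
    have p3 : ∫ u in (1+b-a:ℝ)..1, ell (g2 u) = (a - b) * ell b := by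
      have heq : EqOn (fun u => ell (g2 u)) (fun _ => ell b) (Set.uIcc (1+b-a) 1) := by
        intro x hx
        rw [Set.uIcc_of_le (by linarith : (1+b-a:ℝ) ≤ 1)] at hx
        show ell (g2 x) = ell b
        rw [hg2]
        simp only []
        rw [min_eq_left (by linarith [hx.1] : b ≤ x + a - 1),
          max_eq_right hb.le]
      rw [intervalIntegral.integral_congr heq, intervalIntegral.integral_const, smul_eq_mul]
      ring
    rw [p1, p2, p3]
    ring
  -- final arithmetic
  have key : b^2/2 ≤ a * b * Real.log 2 := by
    have h1 : (0.6931471803:ℝ) < Real.log 2 := Real.log_two_gt_d9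
    have h2 : b * b ≤ a * b := mul_le_mul_of_nonneg_right hba hb.le
    nlinarith [mul_pos (hb.trans_le hba) hb]
  have hellb : ell b = -(b * Real.log b) / Real.log 2 := ell_eq b
  calc f a b ≤ (∫ u in (0:ℝ)..1, ell (g1 u)) + ∫ u in (0:ℝ)..1, ell (g2 u) := by
        rw [step1]; exact step2
    _ = 2 * (∫ t in (0:ℝ)..b, ell t) + (a - b) * ell b := by rw [hI1, hI2]; ring
    _ = (-(a * b * Real.log b) + b^2/2) / Real.log 2 := by
        rw [hIb, hellb]; field_simp; ring
    _ ≤ (-(a * b * Real.log b) + a * b * Real.log 2) / Real.log 2 := by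
        gcongr
    _ = a * b * Real.logb 2 (1 / b) + a * b := by
        rw [Real.logb, one_div, Real.log_inv]; field_simp
end GW
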